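/- Let n ≥ 3 and let P be an n-partite biseparable distribution, i.e., a convex combination over bipartitions g|ḡ of products Q(a⃗_g|x⃗_g, λ)·R(a⃗_ḡ|x⃗_ḡ, λ) with each factor no-signalling. Then P satisfies both I_sym = ∑_{i<j} I^{ij}_{0⃗|0⃗} − C(n−1,2)·P(0⃗|0⃗) ≤ 0 and I_① = ∑_{j=2}^{n} I^{1j}_{0⃗|0⃗} − (n−2)·P(0⃗|0⃗) ≤ 0. -/
import Mathlib


open Finset

noncomputable section

/-- `Q` depends only on the outcomes and inputs of the parties in `S`. -/
def DepOn {n : ℕ} (S : Finset (Fin n))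
    (Q : (Fin n → Fin 2) → (Fin n → Fin 2) → ℝ) : Prop :=
  ∀ a a' x x' : Fin n → Fin 2, (∀ k ∈ S, a k = a' k) → (∀ k ∈ S, x k = x' k) →
    Q a x = Q a' x'

/-- `Q` is a probability distribution on the group `S` of parties. -/
def IsDistOn {n : ℕ} (S : Finset (Fin n))
    (Q : (Fin n → Fin 2) → (Fin n → Fin 2) → ℝ) : Prop :=
  (∀ a x, 0 ≤ Q a x) ∧ (∀ x, ∑ a, Q a x = 2 ^ (n - S.card)) ∧ DepOn S Q

/-- `Q` is no-signalling. -/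
def IsNS {n : ℕ} (Q : (Fin n → Fin 2) → (Fin n → Fin 2) → ℝ) : Prop :=
  ∀ (k : Fin n) (a x x' : Fin n → Fin 2), (∀ l, l ≠ k → x l = x' l) →
    ∑ v, Q (Function.update a k v) x = ∑ v, Q (Function.update a k v) x'

/-- The all-zero outcome/input string. -/
def zvec (n : ℕ) : Fin n → Fin 2 := fun _ => 0

/-- The string which is zero except at positions `i` (value `u`) and `j` (value `v`). -/
def upd2 (n : ℕ) (i j : Fin n) (u v : Fin 2) : Fin n → Fin 2 :=
  Function.update (Function.update (zvec n) i u) j v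

/-- The lifted CHSH-variant `I^{ij}_{0⃗|0⃗}` on parties `i, j`. -/
def liftedCHSH (n : ℕ) (P : (Fin n → Fin 2) → (Fin n → Fin 2) → ℝ) (i j : Fin n) : ℝ :=
  P (upd2 n i j 0 0) (upd2 n i j 0 0) - P (upd2 n i j 1 0) (upd2 n i j 1 0)
    - P (upd2 n i j 0 1) (upd2 n i j 0 1) - P (upd2 n i j 0 0) (upd2 n i j 1 1)

/-- The symmetric Bell expression `I_sym = ∑_{i<j} I^{ij}_{0⃗|0⃗} − C(n−1,2)·P(0⃗|0⃗)`. -/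
def Isym (n : ℕ) (P : (Fin n → Fin 2) → (Fin n → Fin 2) → ℝ) : ℝ :=
  (∑ i, ∑ j ∈ univ.filter (fun j => i < j), liftedCHSH n P i j)
    - ((n - 1).choose 2 : ℝ) * P (zvec n) (zvec n)

/-- The centered Bell expression `I_① = ∑_{j>1} I^{1j}_{0⃗|0⃗} − (n−2)·P(0⃗|0⃗)`. -/
def Icent (n : ℕ) (hn : 3 ≤ n) (P : (Fin n → Fin 2) → (Fin n → Fin 2) → ℝ) : ℝ :=
  (∑ j ∈ univ.filter (fun j => (⟨0, by omega⟩ : Fin n) < j),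
      liftedCHSH n P ⟨0, by omega⟩ j)
    - ((n : ℝ) - 2) * P (zvec n) (zvec n)


/-! ### Auxiliary lemmas -/

lemma chsh_core (q00 q01 q10 q11 r00 r01 r10 r11 : ℝ)
    (hq00 : 0 ≤ q00) (hq01 : 0 ≤ q01) (hq10 : 0 ≤ q10) (hq11 : 0 ≤ q11)
    (hr00 : 0 ≤ r00) (hr01 : 0 ≤ r01) (hr10 : 0 ≤ r10) (hr11 : 0 ≤ r11)
    (hq : q00 + q10 = q01 + q11) (hr : r00 + r10 = r01 + r11) :
    q00 * r00 - q11 * r00 - q00 * r11 - q01 * r01 ≤ 0 := by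
  rcases le_total q00 q01 with h | h
  · nlinarith [mul_nonneg hq00 (show (0:ℝ) ≤ r01 + r11 - r00 by linarith),
      mul_nonneg hr01 (sub_nonneg.mpr h), mul_nonneg hq11 hr00]
  · rcases le_total r00 r01 with h2 | h2
    · nlinarith [mul_nonneg hr00 (show (0:ℝ) ≤ q01 + q11 - q00 by linarith),
        mul_nonneg hq01 (sub_nonneg.mpr h2), mul_nonneg hq00 hr11]
    · nlinarith [mul_nonneg (sub_nonneg.mpr h) (sub_nonneg.mpr h2),
        mul_nonneg hr00 (show (0:ℝ) ≤ q11 - q00 + q01 by linarith),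
        mul_nonneg hq00 (show (0:ℝ) ≤ r11 - r00 + r01 by linarith)]

lemma upd2_zero (n : ℕ) (i j : Fin n) : upd2 n i j 0 0 = zvec n := by
  unfold upd2
  rw [show Function.update (zvec n) i (0 : Fin 2) = zvec n from Function.update_eq_self i (zvec n),
    show Function.update (zvec n) j (0 : Fin 2) = zvec n from Function.update_eq_self j (zvec n)]

lemma trivial_bound {n : ℕ} (P : (Fin n → Fin 2) → (Fin n → Fin 2) → ℝ)
    (hP : ∀ a x, 0 ≤ P a x) (i j : Fin n) :
    liftedCHSH n P i j ≤ P (zvec n) (zvec n) := by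
  have h1 := hP (upd2 n i j 1 0) (upd2 n i j 1 0)
  have h2 := hP (upd2 n i j 0 1) (upd2 n i j 0 1)
  have h3 := hP (upd2 n i j 0 0) (upd2 n i j 1 1)
  rw [upd2_zero] at h3
  rw [liftedCHSH, upd2_zero]
  linarith

lemma cross_bound {n : ℕ} (S : Finset (Fin n))
    (Q R : (Fin n → Fin 2) → (Fin n → Fin 2) → ℝ)
    (hQ0 : ∀ a x, 0 ≤ Q a x) (hQd : DepOn S Q) (hQns : IsNS Q)
    (hR0 : ∀ a x, 0 ≤ R a x) (hRd : DepOn Sᶜ R) (hRns : IsNS R)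
    (i j : Fin n) (hi : i ∈ S) (hj : j ∉ S) :
    liftedCHSH n (fun a x => Q a x * R a x) i j ≤ 0 := by
  have hij : i ≠ j := fun h => hj (h ▸ hi)
  have hQeq : ∀ u v u' v', Q (upd2 n i j u v) (upd2 n i j u' v')
      = Q (Function.update (zvec n) i u) (Function.update (zvec n) i u') := by
    intro u v u' v'
    apply hQd
    · intro k hk
      have hkj : k ≠ j := fun h => hj (h ▸ hk)
      simp [upd2, Function.update_of_ne hkj]
    · intro k hk
      have hkj : k ≠ j := fun h => hj (h ▸ hk)
      simp [upd2, Function.update_of_ne hkj]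
  have hReq : ∀ u v u' v', R (upd2 n i j u v) (upd2 n i j u' v')
      = R (Function.update (zvec n) j v) (Function.update (zvec n) j v') := by
    have harg : ∀ (u v : Fin 2), ∀ k ∈ Sᶜ, upd2 n i j u v k
        = Function.update (zvec n) j v k := by
      intro u v k hk
      have hki : k ≠ i := fun h => (Finset.mem_compl.mp hk) (h ▸ hi)
      by_cases hkj : k = j
      · subst hkj; simp [upd2]
      · simp [upd2, Function.update_of_ne hkj, Function.update_of_ne hki]
    intro u v u' v'
    exact hRd _ _ _ _ (harg u v) (harg u' v')
  have hqns : Q (Function.update (zvec n) i 0) (Function.update (zvec n) i 0)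
        + Q (Function.update (zvec n) i 1) (Function.update (zvec n) i 0)
      = Q (Function.update (zvec n) i 0) (Function.update (zvec n) i 1)
        + Q (Function.update (zvec n) i 1) (Function.update (zvec n) i 1) := by
    have := hQns i (zvec n) (Function.update (zvec n) i 0) (Function.update (zvec n) i 1)
      (fun l hl => by rw [Function.update_of_ne hl, Function.update_of_ne hl])
    simpa [Fin.sum_univ_two] using this
  have hrns : R (Function.update (zvec n) j 0) (Function.update (zvec n) j 0)
        + R (Function.update (zvec n) j 1) (Function.update (zvec n) j 0)
      = R (Function.update (zvec n) j 0) (Function.update (zvec n) j 1)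
        + R (Function.update (zvec n) j 1) (Function.update (zvec n) j 1) := by
    have := hRns j (zvec n) (Function.update (zvec n) j 0) (Function.update (zvec n) j 1)
      (fun l hl => by rw [Function.update_of_ne hl, Function.update_of_ne hl])
    simpa [Fin.sum_univ_two] using this
  simp only [liftedCHSH, hQeq, hReq]
  exact chsh_core _ _ _ _ _ _ _ _ (hQ0 _ _) (hQ0 _ _) (hQ0 _ _) (hQ0 _ _)
    (hR0 _ _) (hR0 _ _) (hR0 _ _) (hR0 _ _) hqns hrns

lemma pairs_card {n : ℕ} (A : Finset (Fin n)) :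
    2 * ∑ i ∈ A, (A.filter fun j => i < j).card = A.card * A.card - A.card := by
  have h1 : ∑ i ∈ A, (A.filter fun j => i < j).card
      = ((A ×ˢ A).filter fun p => p.1 < p.2).card := by
    rw [Finset.card_filter, Finset.sum_product]
    exact Finset.sum_congr rfl fun i _ => (Finset.card_filter _ _)
  have h2 : ((A ×ˢ A).filter fun p => p.1 < p.2).card
      = ((A ×ˢ A).filter fun p => p.2 < p.1).card := by
    apply Finset.card_bij' (fun p _ => p.swap) (fun p _ => p.swap)
    · intro p _; rfl
    · intro p _; rfl
    · intro p hp
      simp only [Finset.mem_filter, Finset.mem_product] at hp ⊢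
      exact ⟨⟨hp.1.2, hp.1.1⟩, hp.2⟩
    · intro p hp
      simp only [Finset.mem_filter, Finset.mem_product] at hp ⊢
      exact ⟨⟨hp.1.2, hp.1.1⟩, hp.2⟩
  have h3 : ((A ×ˢ A).filter fun p => p.1 < p.2) ∪ ((A ×ˢ A).filter fun p => p.2 < p.1)
      = A.offDiag := by
    ext p
    simp only [Finset.mem_union, Finset.mem_filter, Finset.mem_product, Finset.mem_offDiag]
    constructor
    · rintro (⟨⟨h1, h2⟩, h⟩ | ⟨⟨h1, h2⟩, h⟩)
      · exact ⟨h1, h2, ne_of_lt h⟩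
      · exact ⟨h1, h2, (ne_of_lt h).symm⟩
    · rintro ⟨h1, h2, h⟩
      rcases lt_or_gt_of_ne h with hl | hl
      · exact Or.inl ⟨⟨h1, h2⟩, hl⟩
      · exact Or.inr ⟨⟨h1, h2⟩, hl⟩
  have h4 : Disjoint ((A ×ˢ A).filter fun p => p.1 < p.2)
      ((A ×ˢ A).filter fun p => p.2 < p.1) := by
    rw [Finset.disjoint_left]
    intro p hp hp'
    simp only [Finset.mem_filter] at hp hp'
    exact absurd hp'.2 (not_lt_of_gt hp.2)
  have := Finset.card_union_of_disjoint h4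
  rw [h3] at this
  rw [h1, two_mul, h2]
  nth_rewrite 1 [← h2]
  rw [← this, Finset.offDiag_card]

lemma count_same {n : ℕ} (hn : 3 ≤ n) (S : Finset (Fin n)) (h1 : S.Nonempty)
    (h2 : Sᶜ.Nonempty) :
    ∑ i, ((univ : Finset (Fin n)).filter fun j => i < j ∧ (i ∈ S ↔ j ∈ S)).card
      ≤ (n - 1).choose 2 := by
  have hsplit : ∑ i, ((univ : Finset (Fin n)).filter fun j => i < j ∧ (i ∈ S ↔ j ∈ S)).card
      = (∑ i ∈ S, (S.filter fun j => i < j).card)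
        + ∑ i ∈ Sᶜ, (Sᶜ.filter fun j => i < j).card := by
    rw [← Finset.sum_add_sum_compl S]
    congr 1
    · apply Finset.sum_congr rfl
      intro i hi
      congr 1
      ext j
      simp [hi, and_comm]
    · apply Finset.sum_congr rfl
      intro i hi
      rw [Finset.mem_compl] at hi
      congr 1
      ext j
      simp [hi, and_comm]
  have hp1 := pairs_card S
  have hp2 := pairs_card Sᶜ
  have hs : 1 ≤ S.card := h1.card_pos
  have ht : 1 ≤ Sᶜ.card := h2.card_pos
  have hst : S.card + Sᶜ.card = n := by
    rw [Finset.card_add_card_compl]; simp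
  obtain ⟨a, ha⟩ : ∃ a, S.card = a + 1 := ⟨S.card - 1, by omega⟩
  obtain ⟨b, hb⟩ : ∃ b, Sᶜ.card = b + 1 := ⟨Sᶜ.card - 1, by omega⟩
  have hsq : ∀ c : ℕ, (c + 1) * (c + 1) - (c + 1) = (c + 1) * c := fun c => by
    rw [Nat.mul_succ, Nat.add_sub_cancel]
  rw [ha, hsq] at hp1
  rw [hb, hsq] at hp2
  have hn2 : n = a + b + 2 := by rw [← hst, ha, hb]; ring
  have hch : 2 * ((n - 1).choose 2) = (a + b + 1) * (a + b) := by
    have hn1 : n - 1 = a + b + 1 := by omega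
    rw [hn1, Nat.choose_two_right]
    have h' : a + b + 1 - 1 = a + b := by omega
    rw [h']
    have hdvd : 2 ∣ (a + b + 1) * (a + b) := by
      rw [mul_comm]
      exact (Nat.even_mul_succ_self (a + b)).two_dvd
    rw [Nat.mul_div_cancel' hdvd]
  have hfinal : (a + 1) * a + (b + 1) * b ≤ (a + b + 1) * (a + b) := by nlinarith
  rw [hsplit]
  refine Nat.le_of_mul_le_mul_left ?_ (show 0 < 2 by norm_num)
  rw [Nat.mul_add, hp1, hp2, hch]
  exact hfinal

section PerLambda

variable {n : ℕ} (S : Finset (Fin n)) (Q R : (Fin n → Fin 2) → (Fin n → Fin 2) → ℝ)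

lemma key_bound (hQ0 : ∀ a x, 0 ≤ Q a x) (hQd : DepOn S Q) (hQns : IsNS Q)
    (hR0 : ∀ a x, 0 ≤ R a x) (hRd : DepOn Sᶜ R) (hRns : IsNS R) (i j : Fin n) :
    liftedCHSH n (fun a x => Q a x * R a x) i j
      ≤ if (i ∈ S ↔ j ∈ S) then Q (zvec n) (zvec n) * R (zvec n) (zvec n) else 0 := by
  by_cases hi : i ∈ S <;> by_cases hj : j ∈ S
  · rw [if_pos (iff_of_true hi hj)]
    exact trivial_bound _ (fun a x => mul_nonneg (hQ0 a x) (hR0 a x)) i j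
  · rw [if_neg (by tauto)]
    exact cross_bound S Q R hQ0 hQd hQns hR0 hRd hRns i j hi hj
  · rw [if_neg (by tauto)]
    have hcomm : (fun a x => Q a x * R a x) = (fun a x => R a x * Q a x) := by
      funext a x; ring
    rw [hcomm]
    exact cross_bound Sᶜ R Q hR0 hRd hRns hQ0 (by rwa [compl_compl]) hQns i j
      (Finset.mem_compl.mpr hi) (fun h => (Finset.mem_compl.mp h) hj)
  · rw [if_pos (iff_of_false hi hj)]
    exact trivial_bound _ (fun a x => mul_nonneg (hQ0 a x) (hR0 a x)) i j

lemma ite_sum_eval (P0 : ℝ) (i : Fin n) :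
    ∑ j ∈ univ.filter (fun j => i < j), (if (i ∈ S ↔ j ∈ S) then P0 else 0)
      = ((univ.filter fun j => i < j ∧ (i ∈ S ↔ j ∈ S)).card : ℝ) * P0 := by
  rw [Finset.sum_filter]
  have h : ∀ j : Fin n, (if i < j then (if (i ∈ S ↔ j ∈ S) then P0 else 0) else 0)
      = if (i < j ∧ (i ∈ S ↔ j ∈ S)) then P0 else 0 := fun j => by
    by_cases h1 : i < j <;> by_cases h2 : (i ∈ S ↔ j ∈ S) <;> simp [h1, h2]
  simp_rw [h]
  rw [← Finset.sum_filter, Finset.sum_const, nsmul_eq_mul]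

lemma prod_Isym (hn : 3 ≤ n) (h1 : S.Nonempty) (h2 : Sᶜ.Nonempty)
    (hQ0 : ∀ a x, 0 ≤ Q a x) (hQd : DepOn S Q) (hQns : IsNS Q)
    (hR0 : ∀ a x, 0 ≤ R a x) (hRd : DepOn Sᶜ R) (hRns : IsNS R) :
    Isym n (fun a x => Q a x * R a x) ≤ 0 := by
  have hP0 : 0 ≤ Q (zvec n) (zvec n) * R (zvec n) (zvec n) :=
    mul_nonneg (hQ0 _ _) (hR0 _ _)
  have hsum : ∑ i, ∑ j ∈ univ.filter (fun j => i < j),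
        liftedCHSH n (fun a x => Q a x * R a x) i j
      ≤ ∑ i, ((univ.filter fun j => i < j ∧ (i ∈ S ↔ j ∈ S)).card : ℝ)
          * (Q (zvec n) (zvec n) * R (zvec n) (zvec n)) := by
    refine Finset.sum_le_sum fun i _ => ?_
    rw [← ite_sum_eval S _ i]
    exact Finset.sum_le_sum fun j _ => key_bound S Q R hQ0 hQd hQns hR0 hRd hRns i j
  have hcount := count_same hn S h1 h2
  have hsum2 : ∑ i, ((univ.filter fun j => i < j ∧ (i ∈ S ↔ j ∈ S)).card : ℝ)
        * (Q (zvec n) (zvec n) * R (zvec n) (zvec n))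
      ≤ ((n - 1).choose 2 : ℝ) * (Q (zvec n) (zvec n) * R (zvec n) (zvec n)) := by
    rw [← Finset.sum_mul, ← Nat.cast_sum]
    exact mul_le_mul_of_nonneg_right (by exact_mod_cast hcount) hP0
  rw [Isym]
  linarith

lemma prod_Icent (hn : 3 ≤ n) (h1 : S.Nonempty) (h2 : Sᶜ.Nonempty)
    (hQ0 : ∀ a x, 0 ≤ Q a x) (hQd : DepOn S Q) (hQns : IsNS Q)
    (hR0 : ∀ a x, 0 ≤ R a x) (hRd : DepOn Sᶜ R) (hRns : IsNS R) :
    Icent n hn (fun a x => Q a x * R a x) ≤ 0 := by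
  set z0 : Fin n := (⟨0, by omega⟩ : Fin n) with hz0
  have hP0 : 0 ≤ Q (zvec n) (zvec n) * R (zvec n) (zvec n) :=
    mul_nonneg (hQ0 _ _) (hR0 _ _)
  have hsum : ∑ j ∈ univ.filter (fun j => z0 < j),
        liftedCHSH n (fun a x => Q a x * R a x) z0 j
      ≤ ((univ.filter fun j => z0 < j ∧ (z0 ∈ S ↔ j ∈ S)).card : ℝ)
          * (Q (zvec n) (zvec n) * R (zvec n) (zvec n)) := by
    rw [← ite_sum_eval S _ z0]
    exact Finset.sum_le_sum fun j _ => key_bound S Q R hQ0 hQd hQns hR0 hRd hRns z0 j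
  have hs : 1 ≤ S.card := h1.card_pos
  have ht : 1 ≤ Sᶜ.card := h2.card_pos
  have hst : S.card + Sᶜ.card = n := by
    rw [Finset.card_add_card_compl]; simp
  have hcard : ((univ : Finset (Fin n)).filter fun j => z0 < j ∧ (z0 ∈ S ↔ j ∈ S)).card
      ≤ n - 2 := by
    by_cases h0 : z0 ∈ S
    · have hsub : ((univ : Finset (Fin n)).filter fun j => z0 < j ∧ (z0 ∈ S ↔ j ∈ S))
          ⊆ S.erase z0 := by
        intro j hj
        simp only [Finset.mem_filter] at hj
        exact Finset.mem_erase.mpr ⟨ne_of_gt hj.2.1, hj.2.2.mp h0⟩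
      calc ((univ : Finset (Fin n)).filter fun j => z0 < j ∧ (z0 ∈ S ↔ j ∈ S)).card
          ≤ (S.erase z0).card := Finset.card_le_card hsub
        _ = S.card - 1 := Finset.card_erase_of_mem h0
        _ ≤ n - 2 := by omega
    · have hsub : ((univ : Finset (Fin n)).filter fun j => z0 < j ∧ (z0 ∈ S ↔ j ∈ S))
          ⊆ Sᶜ.erase z0 := by
        intro j hj
        simp only [Finset.mem_filter] at hj
        refine Finset.mem_erase.mpr ⟨ne_of_gt hj.2.1, Finset.mem_compl.mpr ?_⟩
        exact fun hjS => h0 (hj.2.2.mpr hjS)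
      calc ((univ : Finset (Fin n)).filter fun j => z0 < j ∧ (z0 ∈ S ↔ j ∈ S)).card
          ≤ (Sᶜ.erase z0).card := Finset.card_le_card hsub
        _ = Sᶜ.card - 1 := Finset.card_erase_of_mem (Finset.mem_compl.mpr h0)
        _ ≤ n - 2 := by omega
  have hcast : (((univ : Finset (Fin n)).filter
        fun j => z0 < j ∧ (z0 ∈ S ↔ j ∈ S)).card : ℝ) ≤ (n : ℝ) - 2 := by
    have h2n : ((n - 2 : ℕ) : ℝ) = (n : ℝ) - 2 := by
      have : (2 : ℕ) ≤ n := by omega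
      push_cast [this]
      ring
    rw [← h2n]
    exact_mod_cast hcard
  rw [Icent]
  have := mul_le_mul_of_nonneg_right hcast hP0
  linarith

end PerLambda

lemma lifted_sum {n N : ℕ} (q : Fin N → ℝ)
    (Q R : Fin N → (Fin n → Fin 2) → (Fin n → Fin 2) → ℝ)
    (P : (Fin n → Fin 2) → (Fin n → Fin 2) → ℝ)
    (hP : ∀ a x, P a x = ∑ l, q l * Q l a x * R l a x) (i j : Fin n) :
    liftedCHSH n P i j
      = ∑ l, q l * liftedCHSH n (fun a x => Q l a x * R l a x) i j := by
  simp only [liftedCHSH, hP]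
  rw [← Finset.sum_sub_distrib, ← Finset.sum_sub_distrib, ← Finset.sum_sub_distrib]
  exact Finset.sum_congr rfl fun l _ => by ring

/-- any `n`-partite biseparable distribution — a convex combination, over
bipartitions `g λ | (g λ)ᶜ`, of products of no-signalling distributions — satisfies both
`I_sym ≤ 0` and `I_① ≤ 0`. -/
theorem stmt14 (n : ℕ) (hn : 3 ≤ n) (N : ℕ) (q : Fin N → ℝ)
    (g : Fin N → Finset (Fin n))
    (Q R : Fin N → (Fin n → Fin 2) → (Fin n → Fin 2) → ℝ)
    (hq : ∀ l, 0 ≤ q l) (hqsum : ∑ l, q l = 1)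
    (hgroups : ∀ l, (g l).Nonempty ∧ (g l)ᶜ.Nonempty)
    (hQ : ∀ l, IsDistOn (g l) (Q l) ∧ IsNS (Q l))
    (hR : ∀ l, IsDistOn (g l)ᶜ (R l) ∧ IsNS (R l))
    (P : (Fin n → Fin 2) → (Fin n → Fin 2) → ℝ)
    (hP : ∀ a x, P a x = ∑ l, q l * Q l a x * R l a x) :
    Isym n P ≤ 0 ∧ Icent n hn P ≤ 0 := by
  have hIsym : Isym n P = ∑ l, q l * Isym n (fun a x => Q l a x * R l a x) := by
    rw [Isym, hP (zvec n) (zvec n)]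
    simp only [lifted_sum q Q R P hP]
    have e1 : ∑ i : Fin n, ∑ j ∈ univ.filter (fun j => i < j),
          ∑ l, q l * liftedCHSH n (fun a x => Q l a x * R l a x) i j
        = ∑ l, q l * ∑ i : Fin n, ∑ j ∈ univ.filter (fun j => i < j),
            liftedCHSH n (fun a x => Q l a x * R l a x) i j := by
      calc ∑ i : Fin n, ∑ j ∈ univ.filter (fun j => i < j),
            ∑ l, q l * liftedCHSH n (fun a x => Q l a x * R l a x) i j
          = ∑ i : Fin n, ∑ l, ∑ j ∈ univ.filter (fun j => i < j),
              q l * liftedCHSH n (fun a x => Q l a x * R l a x) i j :=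
            Finset.sum_congr rfl fun i _ => Finset.sum_comm
        _ = ∑ l, ∑ i : Fin n, ∑ j ∈ univ.filter (fun j => i < j),
              q l * liftedCHSH n (fun a x => Q l a x * R l a x) i j := Finset.sum_comm
        _ = _ := Finset.sum_congr rfl fun l _ => by simp [Finset.mul_sum]
    rw [e1, Finset.mul_sum, ← Finset.sum_sub_distrib]
    refine Finset.sum_congr rfl fun l _ => ?_
    rw [Isym]
    ring
  have hIcent : Icent n hn P = ∑ l, q l * Icent n hn (fun a x => Q l a x * R l a x) := by
    rw [Icent, hP (zvec n) (zvec n)]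
    simp only [lifted_sum q Q R P hP]
    have e1 : ∑ j ∈ univ.filter (fun j => (⟨0, by omega⟩ : Fin n) < j),
          ∑ l, q l * liftedCHSH n (fun a x => Q l a x * R l a x) ⟨0, by omega⟩ j
        = ∑ l, q l * ∑ j ∈ univ.filter (fun j => (⟨0, by omega⟩ : Fin n) < j),
            liftedCHSH n (fun a x => Q l a x * R l a x) ⟨0, by omega⟩ j := by
      rw [Finset.sum_comm]
      exact Finset.sum_congr rfl fun l _ => by simp [Finset.mul_sum]
    rw [e1, Finset.mul_sum, ← Finset.sum_sub_distrib]
    refine Finset.sum_congr rfl fun l _ => ?_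
    rw [Icent]
    ring
  constructor
  · rw [hIsym]
    refine Finset.sum_nonpos fun l _ => ?_
    have hIl : Isym n (fun a x => Q l a x * R l a x) ≤ 0 :=
      prod_Isym (g l) (Q l) (R l) hn (hgroups l).1 (hgroups l).2
        (hQ l).1.1 (hQ l).1.2.2 (hQ l).2 (hR l).1.1 (hR l).1.2.2 (hR l).2
    exact mul_nonpos_iff.mpr (Or.inl ⟨hq l, hIl⟩)
  · rw [hIcent]
    refine Finset.sum_nonpos fun l _ => ?_
    have hIl : Icent n hn (fun a x => Q l a x * R l a x) ≤ 0 :=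
      prod_Icent (g l) (Q l) (R l) hn (hgroups l).1 (hgroups l).2
        (hQ l).1.1 (hQ l).1.2.2 (hQ l).2 (hR l).1.1 (hR l).1.2.2 (hR l).2
    exact mul_nonpos_iff.mpr (Or.inl ⟨hq l, hIl⟩)


end
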